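/- Let λ₂ ≤ λ₃ ≤ λ₄ ≤ λ₅ be nonnegative reals with λ₂+λ₃+λ₄+λ₅ = 3/2 and λ₂²+λ₃²+λ₄²+λ₅² = 3/4. Then Σ_{α=3}^{5} (1/2 − λ_α)² λ_α² ≤ λ₂(1 − λ₂)(3/4 − λ₂²). -/
import Mathlib

set_option maxHeartbeats 1000000 in
lemma key2 (t z : ℝ) (ht : 0 ≤ t) (hc : (3*z+t)^2 ≤ 6*t-8*t^2) :
    (3-4*t)*(z^3+t*z^2+(t^2-t/2)*z) ≤ 2*t^4-3*t^3+t^2/2+t/2 := by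
  have hC : 0 ≤ 6*t-8*t^2 := le_trans (sq_nonneg _) hc
  have ht4 : t ≤ 3/4 := by nlinarith
  have h34 : (0:ℝ) ≤ 3-4*t := by linarith
  set R := Real.sqrt (6*t-8*t^2) with hRdef
  have hRnn : 0 ≤ R := Real.sqrt_nonneg _
  have hR2 : R^2 = 6*t-8*t^2 := Real.sq_sqrt hC
  have habs : |3*z+t| ≤ R := by
    rw [hRdef, ← Real.sqrt_sq_eq_abs]; exact Real.sqrt_le_sqrt hc
  have hzR : 3*z+t ≤ R := le_of_abs_le habs
  have e1 : R^3 = (6*t-8*t^2)*R := by rw [pow_succ, hR2]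
  have e2 : R^2*z = (6*t-8*t^2)*z := by rw [hR2]
  have e3 : R^2*t = (6*t-8*t^2)*t := by rw [hR2]
  have hstep : z^3+t*z^2+(t^2-t/2)*z ≤
      (-(2*t+R)/6)^3 + t*(-(2*t+R)/6)^2 + (t^2-t/2)*(-(2*t+R)/6) := by
    nlinarith [mul_nonneg (sq_nonneg (z+(2*t+R)/6)) (by linarith : 0 ≤ (R-t)/3 - z),
      e1, e2, e3, hR2]
  have hA : 0 ≤ t*(4*t-3)^2/54 := by positivity
  have hW : 0 ≤ t/2 - 14/9*t^3 + 26/27*t^4 := by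
    nlinarith [mul_nonneg ht (pow_nonneg h34 3),
      mul_nonneg (pow_nonneg ht 2) (pow_nonneg h34 2),
      mul_nonneg (pow_nonneg ht 3) h34, pow_nonneg ht 4]
  have hU2 : 0 ≤ 2916*(1/2-14/9*t^2+26/27*t^3)^2 - t*(4*t-3)^4*(6-8*t) := by
    nlinarith [pow_nonneg h34 6, mul_nonneg ht (pow_nonneg h34 5),
      mul_nonneg (pow_nonneg ht 2) (pow_nonneg h34 4),
      mul_nonneg (pow_nonneg ht 3) (pow_nonneg h34 3),
      mul_nonneg (pow_nonneg ht 4) (pow_nonneg h34 2),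
      mul_nonneg (pow_nonneg ht 5) h34, pow_nonneg ht 6]
  have hU : (t*(4*t-3)^2/54)^2 * R^2 ≤ (t/2 - 14/9*t^3 + 26/27*t^4)^2 := by
    rw [hR2]; nlinarith [mul_nonneg (sq_nonneg t) hU2]
  have sqle : ∀ a b : ℝ, 0 ≤ a → 0 ≤ b → a^2 ≤ b^2 → a ≤ b := by
    intro a b ha hb h; nlinarith
  have hAR : (t*(4*t-3)^2/54) * R ≤ t/2 - 14/9*t^3 + 26/27*t^4 :=
    sqle _ _ (mul_nonneg hA hRnn) hW (by rw [mul_pow]; exact hU)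
  have hfin : (3-4*t)*((-(2*t+R)/6)^3 + t*(-(2*t+R)/6)^2 + (t^2-t/2)*(-(2*t+R)/6))
      ≤ 2*t^4-3*t^3+t^2/2+t/2 := by
    nlinarith [hAR, e1, e3]
  calc (3-4*t)*(z^3+t*z^2+(t^2-t/2)*z)
      ≤ (3-4*t)*((-(2*t+R)/6)^3 + t*(-(2*t+R)/6)^2 + (t^2-t/2)*(-(2*t+R)/6)) :=
        mul_le_mul_of_nonneg_left hstep h34
    _ ≤ 2*t^4-3*t^3+t^2/2+t/2 := hfin

/-- Σ_{α=3}^{5} (1/2 − λ_α)² λ_α² ≤ λ₂(1 − λ₂)(3/4 − λ₂²). -/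
theorem stmt3 (l2 l3 l4 l5 : ℝ)
    (h2 : 0 ≤ l2) (h23 : l2 ≤ l3) (h34 : l3 ≤ l4) (h45 : l4 ≤ l5)
    (hsum : l2 + l3 + l4 + l5 = 3 / 2)
    (hsq : l2 ^ 2 + l3 ^ 2 + l4 ^ 2 + l5 ^ 2 = 3 / 4) :
    (1 / 2 - l3) ^ 2 * l3 ^ 2 + (1 / 2 - l4) ^ 2 * l4 ^ 2 + (1 / 2 - l5) ^ 2 * l5 ^ 2
      ≤ l2 * (1 - l2) * (3 / 4 - l2 ^ 2) := by
  have h5 : l5 = 3/2 - l2 - l3 - l4 := by linarith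
  subst h5
  have hcon : (3*((3/2 - l2 - l3 - l4) - 1/2) + l2)^2 ≤ 6*l2 - 8*l2^2 := by
    nlinarith [sq_nonneg (l3 - l4), hsq]
  have hkey := key2 l2 ((3/2 - l2 - l3 - l4) - 1/2) h2 hcon
  set z := (3/2 - l2 - l3 - l4) - 1/2 with hz
  have heq : l2 * (1 - l2) * (3 / 4 - l2 ^ 2)
      - ((1 / 2 - l3) ^ 2 * l3 ^ 2 + (1 / 2 - l4) ^ 2 * l4 ^ 2
        + (1 / 2 - (3/2 - l2 - l3 - l4)) ^ 2 * (3/2 - l2 - l3 - l4) ^ 2)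
      = (2*l2^4 - 3*l2^3 + l2^2/2 + l2/2) - (3 - 4*l2)*(z^3 + l2*z^2 + (l2^2 - l2/2)*z) := by
    rw [hz]
    linear_combination ((-l2^2 - l2*l3 - l2*l4 + 2*l2 - l3^2 - l3*l4 + 3/2*l3 - l4^2 + 3/2*l4 - 1)
      - (3 - 4*l2)*(l2 + l3 + l4 - 1)/2) * hsq
  linarith [heq, hkey]
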